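/- Let r, s, t ≥ 1 and let α: [s] → [r] and β: [t] → [r] satisfy |α(i+1)−α(i)| ≤ 1 for all i and |β(j+1)−β(j)| ≤ 1 for all j (relation-preserving maps, not necessarily surjective). Color a cell (i,j) of the chessboard [s]×[t] black iff α(i) = β(j). If α(1) = 1, β(1) = 1, and the range of β is contained in the range of α, then there is a black 8-path from (1,1) to the set [s]×{t}. -/

import Mathlib

/-- The chessboard `[s] × [t]`. -/
def board (s t : ℕ) : Set (ℕ × ℕ) :=
  {c | 1 ≤ c.1 ∧ c.1 ≤ s ∧ 1 ≤ c.2 ∧ c.2 ≤ t}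

/-- 8-adjacency of cells. -/
def adj8 (c d : ℕ × ℕ) : Prop :=
  c ≠ d ∧ Nat.dist c.1 d.1 ≤ 1 ∧ Nat.dist c.2 d.2 ≤ 1

/-- There is a path of cells, each satisfying `good`, from the set `A` to the
set `B`, with consecutive cells related by `adj`. -/
def PathBetween (adj : ℕ × ℕ → ℕ × ℕ → Prop) (good : ℕ × ℕ → Prop)
    (A B : Set (ℕ × ℕ)) : Prop :=
  ∃ (L : ℕ) (σ : ℕ → ℕ × ℕ), σ 0 ∈ A ∧ σ L ∈ B ∧
    (∀ i ≤ L, good (σ i)) ∧ ∀ i < L, adj (σ i) (σ (i + 1))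

namespace BPaux

lemma dist_one_iff {a b : ℕ} : Nat.dist a b = 1 ↔ (a = b + 1 ∨ b = a + 1) := by
  simp [Nat.dist]; omega

lemma dist_le_one_iff {a b : ℕ} : Nat.dist a b ≤ 1 ↔ (a = b ∨ a = b + 1 ∨ b = a + 1) := by
  simp [Nat.dist]; omega

def pfr (adj : ℕ × ℕ → ℕ × ℕ → Prop) (good : ℕ × ℕ → Prop) (a b : ℕ × ℕ) : Prop :=
  ∃ (L : ℕ) (σ : ℕ → ℕ × ℕ), σ 0 = a ∧ σ L = b ∧
    (∀ i ≤ L, good (σ i)) ∧ ∀ i < L, adj (σ i) (σ (i + 1))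

/-- horizontal run -/
lemma pfr_hrun {good : ℕ × ℕ → Prop} (j i i' : ℕ)
    (h : ∀ m, min i i' ≤ m → m ≤ max i i' → good (m, j)) :
    pfr adj8 good (i, j) (i', j) := by
  rcases le_total i i' with hle | hle
  · refine ⟨i' - i, fun x => (i + x, j), by simp, by simp [Nat.add_sub_cancel' hle], ?_, ?_⟩
    · intro x hx; exact h _ (by omega) (by omega)
    · intro x hx
      exact ⟨by simp [Prod.ext_iff], by simp [Nat.dist]; omega, by simp [Nat.dist]⟩
  · refine ⟨i - i', fun x => (i - x, j), by simp, by simp [Nat.sub_sub_self hle], ?_, ?_⟩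
    · intro x hx; exact h _ (by omega) (by omega)
    · intro x hx
      refine ⟨by simp [Prod.ext_iff]; omega, by simp [Nat.dist]; omega, by simp [Nat.dist]⟩

/-- vertical run -/
lemma pfr_vrun {good : ℕ × ℕ → Prop} (i j j' : ℕ)
    (h : ∀ m, min j j' ≤ m → m ≤ max j j' → good (i, m)) :
    pfr adj8 good (i, j) (i, j') := by
  rcases le_total j j' with hle | hle
  · refine ⟨j' - j, fun x => (i, j + x), by simp, by simp [Nat.add_sub_cancel' hle], ?_, ?_⟩
    · intro x hx; exact h _ (by omega) (by omega)
    · intro x hx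
      exact ⟨by simp [Prod.ext_iff], by simp [Nat.dist], by simp [Nat.dist]; omega⟩
  · refine ⟨j - j', fun x => (i, j - x), by simp, by simp [Nat.sub_sub_self hle], ?_, ?_⟩
    · intro x hx; exact h _ (by omega) (by omega)
    · intro x hx
      refine ⟨by simp [Prod.ext_iff]; omega, by simp [Nat.dist], by simp [Nat.dist]; omega⟩

lemma even_card_invol {X : Type} [DecidableEq X] (F : Finset X) (φ : X → X)
    (h1 : ∀ x ∈ F, φ x ∈ F) (h2 : ∀ x ∈ F, φ (φ x) = x) (h3 : ∀ x ∈ F, φ x ≠ x) :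
    Even F.card := by
  induction F using Finset.strongInduction with
  | _ F ih =>
    rcases F.eq_empty_or_nonempty with rfl | ⟨x, hx⟩
    · simp
    · have hφx := h1 x hx
      have hne := h3 x hx
      set F' := F.erase x |>.erase (φ x) with hF'
      have hss : F' ⊂ F := by
        refine Finset.ssubset_iff_of_subset ?_ |>.mpr ⟨x, hx, by simp [hF']⟩
        exact (Finset.erase_subset _ _).trans (Finset.erase_subset _ _)
      have hmem : ∀ y, y ∈ F' ↔ (y ∈ F ∧ y ≠ x ∧ y ≠ φ x) := by
        intro y; simp [hF', and_comm, and_left_comm]; tauto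
      have h1' : ∀ y ∈ F', φ y ∈ F' := by
        intro y hy
        rw [hmem] at hy ⊢
        obtain ⟨hyF, hyx, hyφ⟩ := hy
        refine ⟨h1 y hyF, ?_, ?_⟩
        · intro e; exact hyφ (by rw [← e, h2 y hyF])
        · intro e
          have := congrArg φ e
          rw [h2 y hyF, h2 x hx] at this
          exact hyx this
      have h2' : ∀ y ∈ F', φ (φ y) = y := fun y hy => h2 y ((hmem y).mp hy).1
      have h3' : ∀ y ∈ F', φ y ≠ y := fun y hy => h3 y ((hmem y).mp hy).1
      have hcard : F.card = F'.card + 2 := by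
        have hx' : φ x ∈ F.erase x := Finset.mem_erase.mpr ⟨hne, hφx⟩
        have hc1 : (F.erase x).card = F'.card + 1 := by
          rw [hF', Finset.card_erase_of_mem hx']
          have : 0 < (F.erase x).card := Finset.card_pos.mpr ⟨φ x, hx'⟩
          omega
        have h2c : F.card = (F.erase x).card + 1 := by
          rw [Finset.card_erase_of_mem hx]
          have : 0 < F.card := Finset.card_pos.mpr ⟨x, hx⟩
          omega
        omega
      rw [hcard]
      obtain ⟨k, hk⟩ := ih F' hss h1' h2' h3'
      exact ⟨k + 1, by omega⟩

lemma pfr_refl {adj good} {a : ℕ × ℕ} (h : good a) : pfr adj good a a :=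
  ⟨0, fun _ => a, rfl, rfl, fun _ _ => h, fun i hi => absurd hi (Nat.not_lt_zero i)⟩

lemma pfr_single {adj good} {a b : ℕ × ℕ} (ha : good a) (hb : good b) (h : adj a b) :
    pfr adj good a b := by
  refine ⟨1, fun i => if i = 0 then a else b, by simp, by simp, ?_, ?_⟩
  · intro i _; by_cases h0 : i = 0 <;> simp [h0, ha, hb]
  · intro i hi; interval_cases i; simpa using h

lemma pfr_trans {adj good} {a b c : ℕ × ℕ} (h1 : pfr adj good a b) (h2 : pfr adj good b c) :
    pfr adj good a c := by
  obtain ⟨L1, σ1, e10, e11, g1, a1⟩ := h1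
  obtain ⟨L2, σ2, e20, e21, g2, a2⟩ := h2
  refine ⟨L1 + L2, fun k => if k < L1 then σ1 k else σ2 (k - L1), ?_, ?_, ?_, ?_⟩
  · by_cases h : 0 < L1
    · simp [h, e10]
    · have hL : L1 = 0 := by omega
      subst hL
      simpa using e20.trans (e11.symm.trans e10)
  · have : ¬ (L1 + L2 < L1) := by omega
    simp [this, e21]
  · intro i hi
    by_cases h : i < L1
    · simpa [h] using g1 i (le_of_lt h)
    · simpa [h] using g2 (i - L1) (by omega)
  · intro i hi
    by_cases h : i < L1
    · by_cases h' : i + 1 < L1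
      · simpa [h, h'] using a1 i h
      · have hi1 : i + 1 = L1 := by omega
        have : σ2 (i + 1 - L1) = σ1 (i + 1) := by
          rw [hi1]; simp [e20, ← e11]
        simp only [h, h', if_true, if_false, this]
        exact a1 i h
    · have h' : ¬ (i + 1 < L1) := by omega
      have e : i + 1 - L1 = (i - L1) + 1 := by omega
      simp only [h, h', if_false, e]
      exact a2 (i - L1) (by omega)


lemma even_flip_fst {F : Finset (ℕ × ℕ)} {i : ℕ} (hi : 1 ≤ i)
    (h1 : ∀ x ∈ F, x.1 = i + 1 ∨ x.1 + 1 = i)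
    (h2 : ∀ x ∈ F, ((2 * i - x.1, x.2) : ℕ × ℕ) ∈ F) : Even F.card := by
  refine even_card_invol F (fun d => (2 * i - d.1, d.2)) h2 ?_ ?_
  · intro x hx
    obtain h := h1 x hx
    have he : 2 * i - (2 * i - x.1) = x.1 := by omega
    simp [Prod.ext_iff, he]
  · intro x hx
    obtain h := h1 x hx
    simp only [ne_eq, Prod.ext_iff, not_and]
    intro hfst
    omega

lemma even_flip_snd {F : Finset (ℕ × ℕ)} {j : ℕ} (hj : 1 ≤ j)
    (h1 : ∀ x ∈ F, x.2 = j + 1 ∨ x.2 + 1 = j)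
    (h2 : ∀ x ∈ F, ((x.1, 2 * j - x.2) : ℕ × ℕ) ∈ F) : Even F.card := by
  refine even_card_invol F (fun d => (d.1, 2 * j - d.2)) h2 ?_ ?_
  · intro x hx
    obtain h := h1 x hx
    have he : 2 * j - (2 * j - x.2) = x.2 := by omega
    simp [Prod.ext_iff, he]
  · intro x hx
    obtain h := h1 x hx
    simp only [ne_eq, Prod.ext_iff, not_and]
    intro hfst
    omega

lemma even_flip_both {F : Finset (ℕ × ℕ)} {i j : ℕ} (hi : 1 ≤ i) (hj : 1 ≤ j)
    (h1 : ∀ x ∈ F, x.1 = i + 1 ∨ x.1 + 1 = i)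
    (h1' : ∀ x ∈ F, x.2 = j + 1 ∨ x.2 + 1 = j)
    (h2 : ∀ x ∈ F, ((2 * i - x.1, 2 * j - x.2) : ℕ × ℕ) ∈ F) : Even F.card := by
  refine even_card_invol F (fun d => (2 * i - d.1, 2 * j - d.2)) h2 ?_ ?_
  · intro x hx
    obtain h := h1 x hx
    obtain h' := h1' x hx
    have he : 2 * i - (2 * i - x.1) = x.1 := by omega
    have he' : 2 * j - (2 * j - x.2) = x.2 := by omega
    simp [Prod.ext_iff, he, he']
  · intro x hx
    obtain h := h1 x hx
    simp only [ne_eq, Prod.ext_iff, not_and]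
    intro hfst
    omega

lemma even_sum_nat {X : Type} {s : Finset X} {f : X → ℕ}
    (h : ∀ x ∈ s, Even (f x)) : Even (∑ x ∈ s, f x) := by
  classical
  induction s using Finset.induction with
  | empty => simp
  | insert _ _ hx ih =>
    rw [Finset.sum_insert hx]
    exact Even.add (h _ (Finset.mem_insert_self _ _))
      (ih fun x hxs => h x (Finset.mem_insert_of_mem hxs))

def dadj (c d : ℕ × ℕ) : Prop := Nat.dist c.1 d.1 = 1 ∧ Nat.dist c.2 d.2 = 1

lemma core (s t R : ℕ) (α β : ℕ → ℕ) (hs : 1 ≤ s) (ht : 1 ≤ t)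
    (hα1 : α 1 = 1) (hβ1 : β 1 = 1)
    (hαlb : ∀ i, 1 ≤ i → i ≤ s → 1 ≤ α i) (hαub : ∀ i, 1 ≤ i → i ≤ s → α i ≤ R)
    (hβlb : ∀ j, 1 ≤ j → j ≤ t → 1 ≤ β j) (hβub : ∀ j, 1 ≤ j → j ≤ t → β j ≤ R)
    (hαstep : ∀ i, 1 ≤ i → i + 1 ≤ s → Nat.dist (α (i + 1)) (α i) = 1)
    (hβstep : ∀ j, 1 ≤ j → j + 1 ≤ t → Nat.dist (β (j + 1)) (β j) = 1)
    (hαs : α s = R) :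
    ∃ c : ℕ × ℕ, c.2 = t ∧
      pfr dadj (fun c => 1 ≤ c.1 ∧ c.1 ≤ s ∧ 1 ≤ c.2 ∧ c.2 ≤ t ∧ α c.1 = β c.2) (1, 1) c := by
  classical
  set good : ℕ × ℕ → Prop :=
    fun c => 1 ≤ c.1 ∧ c.1 ≤ s ∧ 1 ≤ c.2 ∧ c.2 ≤ t ∧ α c.1 = β c.2 with hgood
  have good11 : good (1, 1) := ⟨le_rfl, hs, le_rfl, ht, by rw [hα1, hβ1]⟩
  rcases Nat.lt_or_ge t 2 with ht2 | ht2
  · have ht1 : t = 1 := by omega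
    subst ht1
    exact ⟨(1, 1), rfl, pfr_refl good11⟩
  have hβ2 : β 2 = 2 := by
    have h1 := hβstep 1 le_rfl ht2
    have h2 := hβlb 2 (by omega) ht2
    rw [show (1:ℕ) + 1 = 2 from rfl, hβ1, dist_one_iff] at h1
    omega
  have hR2 : 2 ≤ R := hβ2 ▸ hβub 2 (by omega) ht2
  have hs2 : 2 ≤ s := by
    rcases Nat.lt_or_ge s 2 with h | h
    · have hs1 : s = 1 := by omega
      rw [hs1, hα1] at hαs
      omega
    · exact h
  have hα2 : α 2 = 2 := by
    have h1 := hαstep 1 le_rfl hs2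
    have h2 := hαlb 2 (by omega) hs2
    rw [show (1:ℕ) + 1 = 2 from rfl, hα1, dist_one_iff] at h1
    omega
  have good22 : good (2, 2) := ⟨by omega, hs2, by omega, ht2, by rw [hα2, hβ2]⟩
  set Rel : ℕ × ℕ → ℕ × ℕ → Prop :=
    fun c d => good c ∧ good d ∧ Nat.dist c.1 d.1 = 1 ∧ Nat.dist c.2 d.2 = 1 with hRel
  set C : Finset (ℕ × ℕ) :=
    (Finset.Icc 1 s ×ˢ Finset.Icc 1 t).filter
      (fun c => good c ∧ Relation.ReflTransGen Rel (1, 1) c) with hC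
  have key : ∀ c, Relation.ReflTransGen Rel (1, 1) c → pfr dadj good (1, 1) c := by
    intro c h
    induction h with
    | refl => exact pfr_refl good11
    | tail hab hbc ih =>
      obtain ⟨g1, g2, d1, d2⟩ := hbc
      exact pfr_trans ih (pfr_single g1 g2 ⟨d1, d2⟩)
  by_cases hend : ∃ c ∈ C, c.2 = t
  · obtain ⟨c, hcC, hct⟩ := hend
    exact ⟨c, hct, key c (Finset.mem_filter.mp hcC).2.2⟩
  · exfalso
    push_neg at hend
    have hC11 : (1, 1) ∈ C := by
      refine Finset.mem_filter.mpr ⟨?_, good11, Relation.ReflTransGen.refl⟩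
      exact Finset.mem_product.mpr ⟨Finset.mem_Icc.mpr ⟨le_rfl, hs⟩, Finset.mem_Icc.mpr ⟨le_rfl, ht⟩⟩
    have hclosed : ∀ c ∈ C, ∀ d, Rel c d → d ∈ C := by
      intro c hcC d hrel
      obtain ⟨hg1, hgd, hd1, hd2⟩ := hrel
      refine Finset.mem_filter.mpr ⟨?_, hgd, Relation.ReflTransGen.tail
        (Finset.mem_filter.mp hcC).2.2 ⟨hg1, hgd, hd1, hd2⟩⟩
      exact Finset.mem_product.mpr ⟨Finset.mem_Icc.mpr ⟨hgd.1, hgd.2.1⟩,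
        Finset.mem_Icc.mpr ⟨hgd.2.2.1, hgd.2.2.2.1⟩⟩
    have hmemF : ∀ c ∈ C, ∀ d, good d → Nat.dist c.1 d.1 = 1 → Nat.dist c.2 d.2 = 1 →
        d ∈ C.filter (Rel c) := by
      intro c hcC d hgd h1 h2
      have hgc : good c := (Finset.mem_filter.mp hcC).2.1
      have hrel : Rel c d := ⟨hgc, hgd, h1, h2⟩
      exact Finset.mem_filter.mpr ⟨hclosed c hcC d hrel, hrel⟩
    have hFelim : ∀ c d, d ∈ C.filter (Rel c) →
        good d ∧ Nat.dist c.1 d.1 = 1 ∧ Nat.dist c.2 d.2 = 1 := by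
      intro c d hd
      have h := (Finset.mem_filter.mp hd).2
      exact ⟨h.2.1, h.2.2.1, h.2.2.2⟩
    have h11 : C.filter (Rel (1, 1)) = {(2, 2)} := by
      ext d
      simp only [Finset.mem_singleton]
      constructor
      · intro hd
        obtain ⟨hgd, h1, h2⟩ := hFelim _ _ hd
        rw [dist_one_iff] at h1 h2
        have hb1 : 1 ≤ d.1 := hgd.1
        have hb2 : 1 ≤ d.2 := hgd.2.2.1
        have e1 : d.1 = 2 := by omega
        have e2 : d.2 = 2 := by omega
        exact Prod.ext e1 e2
      · intro hd
        subst hd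
        exact hmemF _ hC11 (2, 2) good22 (dist_one_iff.mpr (Or.inr rfl))
          (dist_one_iff.mpr (Or.inr rfl))
    have flipfst : ∀ c ∈ C, 2 ≤ c.1 → c.1 + 1 ≤ s → α (c.1 + 1) = α (c.1 - 1) →
        Even ((C.filter (Rel c)).card) := by
      intro c hcC hi2 his heq
      refine even_flip_fst (i := c.1) (by omega) ?_ ?_
      · intro x hx
        obtain ⟨hgx, h1, h2⟩ := hFelim _ _ hx
        rw [dist_one_iff] at h1
        omega
      · intro x hx
        obtain ⟨hgx, h1, h2⟩ := hFelim _ _ hx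
        rw [dist_one_iff] at h1
        obtain ⟨hx1, hxs, hx2, hxt, hxb⟩ := hgx
        have hblack : α (2 * c.1 - x.1) = β x.2 := by
          rcases h1 with h | h
          · rw [show 2 * c.1 - x.1 = c.1 + 1 by omega, heq,
              show c.1 - 1 = x.1 by omega]
            exact hxb
          · rw [show 2 * c.1 - x.1 = c.1 - 1 by omega, ← heq,
              show c.1 + 1 = x.1 by omega]
            exact hxb
        exact hmemF c hcC (2 * c.1 - x.1, x.2)
          ⟨by omega, by omega, hx2, hxt, hblack⟩
          (dist_one_iff.mpr (by omega)) h2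
    have flipsnd : ∀ c ∈ C, 2 ≤ c.2 → c.2 + 1 ≤ t → β (c.2 + 1) = β (c.2 - 1) →
        Even ((C.filter (Rel c)).card) := by
      intro c hcC hj2 hjt heq
      refine even_flip_snd (j := c.2) (by omega) ?_ ?_
      · intro x hx
        obtain ⟨hgx, h1, h2⟩ := hFelim _ _ hx
        rw [dist_one_iff] at h2
        omega
      · intro x hx
        obtain ⟨hgx, h1, h2⟩ := hFelim _ _ hx
        rw [dist_one_iff] at h2
        obtain ⟨hx1, hxs, hx2, hxt, hxb⟩ := hgx
        have hblack : α x.1 = β (2 * c.2 - x.2) := by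
          rcases h2 with h | h
          · rw [show 2 * c.2 - x.2 = c.2 + 1 by omega, heq,
              show c.2 - 1 = x.2 by omega]
            exact hxb
          · rw [show 2 * c.2 - x.2 = c.2 - 1 by omega, ← heq,
              show c.2 + 1 = x.2 by omega]
            exact hxb
        exact hmemF c hcC (x.1, 2 * c.2 - x.2)
          ⟨hx1, hxs, by omega, by omega, hblack⟩
          h1 (dist_one_iff.mpr (by omega))
    have heven : ∀ c ∈ C, c ≠ (1, 1) → Even ((C.filter (Rel c)).card) := by
      intro c hcC hne
      have hgc : good c := (Finset.mem_filter.mp hcC).2.1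
      obtain ⟨hi1, his, hj1, hjt, hblack⟩ := hgc
      have hjtlt : c.2 + 1 ≤ t := by
        have := hend c hcC
        omega
      by_cases hj : c.2 = 1
      · have hieq : α c.1 = 1 := by rw [hblack, hj, hβ1]
        have hi2 : 2 ≤ c.1 := by
          rcases Nat.eq_or_lt_of_le hi1 with h | h
          · exfalso
            exact hne (Prod.ext h.symm hj)
          · omega
        have hisl : c.1 + 1 ≤ s := by
          rcases Nat.eq_or_lt_of_le his with h | h
          · exfalso
            rw [h, hαs] at hieq
            omega
          · omega
        have ha1 : α (c.1 + 1) = 2 := by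
          have hd := hαstep c.1 (by omega) hisl
          have hlb := hαlb (c.1 + 1) (by omega) hisl
          rw [hieq, dist_one_iff] at hd
          omega
        have ha2 : α (c.1 - 1) = 2 := by
          have hd := hαstep (c.1 - 1) (by omega) (by omega)
          have hlb := hαlb (c.1 - 1) (by omega) (by omega)
          rw [show c.1 - 1 + 1 = c.1 by omega, hieq, dist_one_iff] at hd
          omega
        exact flipfst c hcC hi2 hisl (by rw [ha1, ha2])
      · have hj2 : 2 ≤ c.2 := by omega
        by_cases hb : β (c.2 + 1) = β (c.2 - 1)
        · exact flipsnd c hcC hj2 hjtlt hb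
        · have hbp := hβstep c.2 (by omega) hjtlt
          have hbm := hβstep (c.2 - 1) (by omega) (by omega)
          rw [dist_one_iff] at hbp
          rw [show c.2 - 1 + 1 = c.2 by omega, dist_one_iff] at hbm
          have hi2 : 2 ≤ c.1 := by
            rcases Nat.eq_or_lt_of_le hi1 with h | h
            · exfalso
              have hbj : β c.2 = 1 := by rw [← hblack, ← h, hα1]
              have l1 := hβlb (c.2 + 1) (by omega) hjtlt
              have l2 := hβlb (c.2 - 1) (by omega) (by omega)
              omega
            · omega
          have hisl : c.1 + 1 ≤ s := by
            rcases Nat.eq_or_lt_of_le his with h | h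
            · exfalso
              have hbj : β c.2 = R := by rw [← hblack, h, hαs]
              have u1 := hβub (c.2 + 1) (by omega) hjtlt
              have u2 := hβub (c.2 - 1) (by omega) (by omega)
              omega
            · omega
          have hap := hαstep c.1 (by omega) hisl
          have ham := hαstep (c.1 - 1) (by omega) (by omega)
          rw [dist_one_iff] at hap
          rw [show c.1 - 1 + 1 = c.1 by omega, dist_one_iff] at ham
          by_cases ha : α (c.1 + 1) = α (c.1 - 1)
          · exact flipfst c hcC hi2 hisl ha
          · have hsa : α (c.1 + 1) + α (c.1 - 1) = 2 * α c.1 := by omega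
            have hsb : β (c.2 + 1) + β (c.2 - 1) = 2 * β c.2 := by omega
            refine even_flip_both (i := c.1) (j := c.2) (by omega) (by omega) ?_ ?_ ?_
            · intro x hx
              obtain ⟨hgx, h1, h2⟩ := hFelim _ _ hx
              rw [dist_one_iff] at h1
              omega
            · intro x hx
              obtain ⟨hgx, h1, h2⟩ := hFelim _ _ hx
              rw [dist_one_iff] at h2
              omega
            · intro x hx
              obtain ⟨hgx, h1, h2⟩ := hFelim _ _ hx
              rw [dist_one_iff] at h1 h2
              obtain ⟨hx1, hxs, hx2, hxt, hxb⟩ := hgx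
              have e1 : α x.1 + α (2 * c.1 - x.1) = 2 * α c.1 := by
                rcases h1 with h | h
                · rw [show x.1 = c.1 - 1 by omega, show 2 * c.1 - (c.1 - 1) = c.1 + 1 by omega]
                  omega
                · rw [show x.1 = c.1 + 1 by omega, show 2 * c.1 - (c.1 + 1) = c.1 - 1 by omega]
                  omega
              have e2 : β x.2 + β (2 * c.2 - x.2) = 2 * β c.2 := by
                rcases h2 with h | h
                · rw [show x.2 = c.2 - 1 by omega, show 2 * c.2 - (c.2 - 1) = c.2 + 1 by omega]
                  omega
                · rw [show x.2 = c.2 + 1 by omega, show 2 * c.2 - (c.2 + 1) = c.2 - 1 by omega]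
                  omega
              have hblk : α (2 * c.1 - x.1) = β (2 * c.2 - x.2) := by omega
              exact hmemF c hcC (2 * c.1 - x.1, 2 * c.2 - x.2)
                ⟨by omega, by omega, by omega, by omega, hblk⟩
                (dist_one_iff.mpr (by omega)) (dist_one_iff.mpr (by omega))
    set E := (C ×ˢ C).filter (fun p => Rel p.1 p.2) with hE
    have hEeven : Even E.card := by
      refine even_card_invol E Prod.swap ?_ ?_ ?_
      · intro p hp
        obtain ⟨hmem, hrel⟩ := Finset.mem_filter.mp hp
        obtain ⟨hp1, hp2⟩ := Finset.mem_product.mp hmem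
        refine Finset.mem_filter.mpr ⟨Finset.mem_product.mpr ⟨hp2, hp1⟩, ?_⟩
        exact ⟨hrel.2.1, hrel.1, by rw [Nat.dist_comm]; exact hrel.2.2.1,
          by rw [Nat.dist_comm]; exact hrel.2.2.2⟩
      · intro p _
        exact Prod.swap_swap p
      · intro p hp heq
        have hrel := (Finset.mem_filter.mp hp).2
        have h2 : p.2 = p.1 := congrArg Prod.fst heq
        have hd := hrel.2.2.1
        rw [h2, Nat.dist_self] at hd
        omega
    have hEcard : E.card = ∑ c ∈ C, (C.filter (Rel c)).card := by
      rw [Finset.card_eq_sum_card_fiberwise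
        (f := Prod.fst) (t := C) (fun p hp => (Finset.mem_product.mp
          (Finset.mem_filter.mp hp).1).1)]
      refine Finset.sum_congr rfl ?_
      intro c hcC
      refine Finset.card_bij (fun p _ => p.2) ?_ ?_ ?_
      · intro p hp
        obtain ⟨hpE, hpc⟩ := Finset.mem_filter.mp hp
        obtain ⟨hmem, hrel⟩ := Finset.mem_filter.mp hpE
        obtain ⟨_, hp2⟩ := Finset.mem_product.mp hmem
        rw [hpc] at hrel
        exact Finset.mem_filter.mpr ⟨hp2, hrel⟩
      · intro p hp q hq hpq
        obtain ⟨_, hpc⟩ := Finset.mem_filter.mp hp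
        obtain ⟨_, hqc⟩ := Finset.mem_filter.mp hq
        exact Prod.ext (hpc.trans hqc.symm) hpq
      · intro d hd
        obtain ⟨hdC, hrel⟩ := Finset.mem_filter.mp hd
        exact ⟨(c, d), Finset.mem_filter.mpr ⟨Finset.mem_filter.mpr
          ⟨Finset.mem_product.mpr ⟨hcC, hdC⟩, hrel⟩, rfl⟩, rfl⟩
    have hsum : (C.filter (Rel (1, 1))).card
        + ∑ c ∈ C.erase (1, 1), (C.filter (Rel c)).card
        = ∑ c ∈ C, (C.filter (Rel c)).card :=
      Finset.add_sum_erase C (fun c => (C.filter (Rel c)).card) hC11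
    have hev2 : Even (∑ c ∈ C.erase (1, 1), (C.filter (Rel c)).card) :=
      even_sum_nat (fun c hc => heven c (Finset.mem_of_mem_erase hc)
        (Finset.ne_of_mem_erase hc))
    have h1card : (C.filter (Rel (1, 1))).card = 1 := by rw [h11]; rfl
    obtain ⟨a, ha⟩ := hEeven
    obtain ⟨b, hb⟩ := hev2
    omega

end BPaux

namespace BPaux2

attribute [local instance] Classical.propDecidable

variable (γ : ℕ → ℕ) (n : ℕ)

noncomputable def nxt (x : ℕ) : ℕ :=
  if h : ∃ m, x < m ∧ m ≤ n ∧ γ m ≠ γ x then Nat.find h else x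

noncomputable def idx : ℕ → ℕ
  | 0 => 1
  | k + 1 => nxt γ n (idx k)

lemma le_nxt (x : ℕ) : x ≤ nxt γ n x := by
  unfold nxt
  split
  · next h => exact le_of_lt (Nat.find_spec h).1
  · exact le_rfl

lemma nxt_le (x : ℕ) (hx : x ≤ n) : nxt γ n x ≤ n := by
  unfold nxt
  split
  · next h => exact (Nat.find_spec h).2.1
  · exact hx

lemma nxt_stable {x : ℕ} (h : nxt γ n x = x) : ∀ m, x < m → m ≤ n → γ m = γ x := by
  intro m h1 h2
  by_contra hne
  have hex : ∃ m, x < m ∧ m ≤ n ∧ γ m ≠ γ x := ⟨m, h1, h2, hne⟩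
  have := (Nat.find_spec hex).1
  unfold nxt at h
  rw [dif_pos hex] at h
  omega

lemma nxt_change {x : ℕ} (h : nxt γ n x ≠ x) :
    x < nxt γ n x ∧ nxt γ n x ≤ n ∧ γ (nxt γ n x) ≠ γ x ∧
      ∀ m, x < m → m < nxt γ n x → γ m = γ x := by
  unfold nxt at h ⊢
  split at h
  · next hex =>
    rw [dif_pos hex]
    refine ⟨(Nat.find_spec hex).1, (Nat.find_spec hex).2.1, (Nat.find_spec hex).2.2, ?_⟩
    intro m h1 h2
    by_contra hne
    exact absurd (Nat.find_min hex h2 ⟨h1, by have := (Nat.find_spec hex).2.1; omega, hne⟩) (by simp)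
  · simp at h

lemma idx_le (hn : 1 ≤ n) : ∀ k, idx γ n k ≤ n := by
  intro k
  induction k with
  | zero => simpa [idx]
  | succ k ih => exact nxt_le γ n _ ih

lemma idx_pos : ∀ k, 1 ≤ idx γ n k := by
  intro k
  induction k with
  | zero => simp [idx]
  | succ k ih => exact le_trans ih (le_nxt γ n _)

lemma exists_stab (hn : 1 ≤ n) : ∃ k, idx γ n (k + 1) = idx γ n k := by
  by_contra h
  push_neg at h
  have grow : ∀ k, k + 1 ≤ idx γ n k := by
    intro k
    induction k with
    | zero => simp [idx]
    | succ k ih =>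
      have := (nxt_change γ n (h k)).1
      have : idx γ n k < idx γ n (k + 1) := this
      omega
  have := grow n
  have := idx_le γ n hn n
  omega

noncomputable def stab (hn : 1 ≤ n) : ℕ := Nat.find (exists_stab γ n hn)

lemma idx_strict (hn : 1 ≤ n) {k : ℕ} (hk : k < stab γ n hn) :
    idx γ n k < idx γ n (k + 1) := by
  have hne : idx γ n (k + 1) ≠ idx γ n k := Nat.find_min (exists_stab γ n hn) hk
  exact (nxt_change γ n hne).1

lemma idx_mono (hn : 1 ≤ n) : ∀ {k l : ℕ}, k ≤ l → l ≤ stab γ n hn → idx γ n k ≤ idx γ n l := by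
  intro k l hkl hl
  induction l with
  | zero => simp_all
  | succ l ih =>
    rcases Nat.eq_or_lt_of_le hkl with rfl | hlt
    · exact le_rfl
    · exact le_trans (ih (by omega) (by omega)) (le_of_lt (idx_strict γ n hn (by omega)))

lemma plateau (hn : 1 ≤ n) {k : ℕ} (hk : k < stab γ n hn) :
    ∀ m, idx γ n k ≤ m → m < idx γ n (k + 1) → γ m = γ (idx γ n k) := by
  intro m h1 h2
  rcases Nat.eq_or_lt_of_le h1 with rfl | h1'
  · rfl
  · have hne : idx γ n (k + 1) ≠ idx γ n k := Nat.find_min (exists_stab γ n hn) hk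
    exact (nxt_change γ n hne).2.2.2 m h1' h2

lemma stab_spec (hn : 1 ≤ n) :
    ∀ m, idx γ n (stab γ n hn) ≤ m → m ≤ n → γ m = γ (idx γ n (stab γ n hn)) := by
  intro m h1 h2
  rcases Nat.eq_or_lt_of_le h1 with rfl | h1'
  · rfl
  · exact nxt_stable γ n (Nat.find_spec (exists_stab γ n hn)) m h1' h2

lemma idx_step (hn : 1 ≤ n)
    (hstep : ∀ i, 1 ≤ i → i + 1 ≤ n → Nat.dist (γ (i + 1)) (γ i) ≤ 1)
    {k : ℕ} (hk : k < stab γ n hn) :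
    Nat.dist (γ (idx γ n (k + 1))) (γ (idx γ n k)) = 1 := by
  have hne : idx γ n (k + 1) ≠ idx γ n k := Nat.find_min (exists_stab γ n hn) hk
  have hne' : nxt γ n (idx γ n k) ≠ idx γ n k := hne
  obtain ⟨hlt, hyn, hgne, hbet⟩ := nxt_change γ n hne'
  have hyd : idx γ n (k + 1) = nxt γ n (idx γ n k) := rfl
  have hx1 : 1 ≤ idx γ n k := idx_pos γ n k
  have hy2 : 2 ≤ nxt γ n (idx γ n k) := by omega
  have hplat : γ (nxt γ n (idx γ n k) - 1) = γ (idx γ n k) := by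
    rcases Nat.eq_or_lt_of_le (Nat.succ_le_of_lt hlt) with he | hl
    · rw [show nxt γ n (idx γ n k) - 1 = idx γ n k by omega]
    · exact hbet _ (by omega) (by omega)
  have hd := hstep (nxt γ n (idx γ n k) - 1) (by omega) (by omega)
  rw [show nxt γ n (idx γ n k) - 1 + 1 = nxt γ n (idx γ n k) by omega, hplat] at hd
  have hne0 : Nat.dist (γ (nxt γ n (idx γ n k))) (γ (idx γ n k)) ≠ 0 :=
    fun h0 => hgne (Nat.eq_of_dist_eq_zero h0)
  rw [hyd]
  omega

lemma idx_surj (hn : 1 ≤ n) :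
    ∀ m, 1 ≤ m → m ≤ n → ∃ k, k ≤ stab γ n hn ∧ idx γ n k ≤ m ∧ γ m = γ (idx γ n k) := by
  intro m h1 h2
  classical
  set S := stab γ n hn with hS
  have hP0 : idx γ n 0 ≤ m := by simpa [idx]
  have hkle : idx γ n (Nat.findGreatest (fun k => idx γ n k ≤ m) S) ≤ m :=
    Nat.findGreatest_spec (P := fun k => idx γ n k ≤ m) (Nat.zero_le S) hP0
  refine ⟨Nat.findGreatest (fun k => idx γ n k ≤ m) S, Nat.findGreatest_le S, hkle, ?_⟩
  rcases Nat.lt_or_ge (Nat.findGreatest (fun k => idx γ n k ≤ m) S) S with hlt | hge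
  · have hnot : ¬ (idx γ n (Nat.findGreatest (fun k => idx γ n k ≤ m) S + 1) ≤ m) :=
      Nat.findGreatest_is_greatest (P := fun k => idx γ n k ≤ m) (n := S) (by omega) (by omega)
    exact plateau γ n hn hlt m hkle (by omega)
  · have hkS : Nat.findGreatest (fun k => idx γ n k ≤ m) S = S :=
      le_antisymm (Nat.findGreatest_le S) hge
    rw [hkS] at hkle ⊢
    exact stab_spec γ n hn m hkle h2

end BPaux2

namespace BPaux

lemma pfr_mono {adj adj' good good' : _} {a b : ℕ × ℕ}
    (h : pfr adj good a b) (hg : ∀ c, good c → good' c)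
    (ha : ∀ c d, adj c d → adj' c d) : pfr adj' good' a b := by
  obtain ⟨L, σ, e0, eL, hgd, hadj⟩ := h
  exact ⟨L, σ, e0, eL, fun i hi => hg _ (hgd i hi), fun i hi => ha _ _ (hadj i hi)⟩

lemma pfr_pullback {adj adj' good good' : _} (map : ℕ × ℕ → ℕ × ℕ) {a b : ℕ × ℕ}
    (h : pfr adj good a b) (h0 : good' (map a))
    (hstep : ∀ p q, good p → good q → adj p q → pfr adj' good' (map p) (map q)) :
    pfr adj' good' (map a) (map b) := by
  obtain ⟨L, σ, e0, eL, hg, hadj⟩ := h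
  have main : ∀ n, n ≤ L → pfr adj' good' (map a) (map (σ n)) := by
    intro n
    induction n with
    | zero => intro _; rw [e0]; exact pfr_refl h0
    | succ n ih =>
      intro hn
      exact pfr_trans (ih (by omega))
        (hstep (σ n) (σ (n + 1)) (hg n (by omega)) (hg (n + 1) hn) (hadj n (by omega)))
  have hfin := main L le_rfl
  rw [eL] at hfin
  exact hfin

lemma pfr_dstep {good : ℕ × ℕ → Prop} {a b : ℕ × ℕ} (ha : good a) (hb : good b)
    (h1 : Nat.dist a.1 b.1 = 1) (h2 : Nat.dist a.2 b.2 ≤ 1) : pfr adj8 good a b := by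
  refine pfr_single ha hb ⟨?_, by omega, h2⟩
  intro he
  rw [he, Nat.dist_self] at h1
  omega

end BPaux

/-- If `α : [s] → [r]` and `β : [t] → [r]` are relation-preserving,
`α 1 = 1`, `β 1 = 1` and `rng β ⊆ rng α`, then in the chessboard `[s]×[t]`
colored black at `(i,j)` iff `α i = β j` there is a black 8-path from `(1,1)`
to the top side `[s]×{t}`. -/
theorem black_path_corner_to_side (r s t : ℕ) (hr : 1 ≤ r) (hs : 1 ≤ s) (ht : 1 ≤ t)
    (α β : ℕ → ℕ)
    (hαmem : ∀ i ∈ Finset.Icc 1 s, α i ∈ Finset.Icc 1 r)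
    (hβmem : ∀ j ∈ Finset.Icc 1 t, β j ∈ Finset.Icc 1 r)
    (hαstep : ∀ i, 1 ≤ i → i + 1 ≤ s → Nat.dist (α (i + 1)) (α i) ≤ 1)
    (hβstep : ∀ j, 1 ≤ j → j + 1 ≤ t → Nat.dist (β (j + 1)) (β j) ≤ 1)
    (hα1 : α 1 = 1) (hβ1 : β 1 = 1)
    (hrng : ∀ j ∈ Finset.Icc 1 t, ∃ i ∈ Finset.Icc 1 s, α i = β j) :
    PathBetween adj8 (fun c => c ∈ board s t ∧ α c.1 = β c.2)
      {((1 : ℕ), (1 : ℕ))} {c | c.2 = t} := by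
    classical
  -- contraction data for α and β
  set Sa := BPaux2.stab α s hs with hSa
  set Sb := BPaux2.stab β t ht with hSb
  set ua : ℕ → ℕ := BPaux2.idx α s with hua
  set ub : ℕ → ℕ := BPaux2.idx β t with hub
  have ua0 : ua 0 = 1 := rfl
  have ub0 : ub 0 = 1 := rfl
  have posa : ∀ x, 1 ≤ ua x := fun x => BPaux2.idx_pos α s x
  have lea : ∀ x, ua x ≤ s := fun x => BPaux2.idx_le α s hs x
  have posb : ∀ x, 1 ≤ ub x := fun x => BPaux2.idx_pos β t x
  have leb : ∀ x, ub x ≤ t := fun x => BPaux2.idx_le β t ht x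
  have stricta : ∀ x, x < Sa → ua x < ua (x + 1) := fun x hx => BPaux2.idx_strict α s hs hx
  have strictb : ∀ x, x < Sb → ub x < ub (x + 1) := fun x hx => BPaux2.idx_strict β t ht hx
  have plata : ∀ x, x < Sa → ∀ m, ua x ≤ m → m < ua (x + 1) → α m = α (ua x) :=
    fun x hx => BPaux2.plateau α s hs hx
  have platb : ∀ x, x < Sb → ∀ m, ub x ≤ m → m < ub (x + 1) → β m = β (ub x) :=
    fun x hx => BPaux2.plateau β t ht hx
  have stepa : ∀ x, x < Sa → Nat.dist (α (ua (x + 1))) (α (ua x)) = 1 :=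
    fun x hx => BPaux2.idx_step α s hs hαstep hx
  have stepb : ∀ x, x < Sb → Nat.dist (β (ub (x + 1))) (β (ub x)) = 1 :=
    fun x hx => BPaux2.idx_step β t ht hβstep hx
  have stabb : ∀ m, ub Sb ≤ m → m ≤ t → β m = β (ub Sb) := BPaux2.stab_spec β t ht
  have surja : ∀ m, 1 ≤ m → m ≤ s → ∃ k, k ≤ Sa ∧ ua k ≤ m ∧ α m = α (ua k) :=
    BPaux2.idx_surj α s hs
  -- contracted sequences (1-based)
  set A : ℕ → ℕ := fun k => α (ua (k - 1)) with hA
  set B : ℕ → ℕ := fun l => β (ub (l - 1)) with hB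
  set sbar := Sa + 1 with hsbar
  set tbar := Sb + 1 with htbar
  set R := (Finset.Icc 1 sbar).sup A with hR
  obtain ⟨kmax, hkmaxmem, hkmaxeq⟩ :=
    Finset.exists_mem_eq_sup (Finset.Icc 1 sbar)
      ⟨1, Finset.mem_Icc.mpr ⟨le_rfl, by omega⟩⟩ A
  obtain ⟨hkmax1, hkmax2⟩ := Finset.mem_Icc.mp hkmaxmem
  set mbar := Nat.findGreatest (fun k => A k = R) sbar with hmbar
  have hmbar1 : 1 ≤ mbar := le_trans hkmax1 (Nat.le_findGreatest hkmax2 hkmaxeq.symm)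
  have hmbar2 : mbar ≤ sbar := Nat.findGreatest_le sbar
  have hmbarR : A mbar = R :=
    Nat.findGreatest_spec (P := fun k => A k = R) hkmax2 hkmaxeq.symm
  have hAub : ∀ k, 1 ≤ k → k ≤ mbar → A k ≤ R := fun k h1 h2 =>
    Finset.le_sup (Finset.mem_Icc.mpr ⟨h1, by omega⟩)
  have hAlb : ∀ k, 1 ≤ k → k ≤ mbar → 1 ≤ A k := by
    intro k _ _
    have h := hαmem (ua (k - 1)) (Finset.mem_Icc.mpr ⟨posa _, lea _⟩)
    exact (Finset.mem_Icc.mp h).1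
  have hBlb : ∀ l, 1 ≤ l → l ≤ tbar → 1 ≤ B l := by
    intro l _ _
    have h := hβmem (ub (l - 1)) (Finset.mem_Icc.mpr ⟨posb _, leb _⟩)
    exact (Finset.mem_Icc.mp h).1
  have hBub : ∀ l, 1 ≤ l → l ≤ tbar → B l ≤ R := by
    intro l _ _
    obtain ⟨i, himem, hieq⟩ := hrng (ub (l - 1)) (Finset.mem_Icc.mpr ⟨posb _, leb _⟩)
    obtain ⟨hi1, hi2⟩ := Finset.mem_Icc.mp himem
    obtain ⟨k, hkSa, _, hkeq⟩ := surja i hi1 hi2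
    have heq : B l = A (k + 1) := by
      show β (ub (l - 1)) = α (ua (k + 1 - 1))
      rw [show k + 1 - 1 = k from rfl, ← hkeq, hieq]
    rw [heq]
    exact Finset.le_sup (Finset.mem_Icc.mpr ⟨by omega, by omega⟩)
  have hAstep : ∀ k, 1 ≤ k → k + 1 ≤ mbar → Nat.dist (A (k + 1)) (A k) = 1 := by
    intro k h1 h2
    show Nat.dist (α (ua (k + 1 - 1))) (α (ua (k - 1))) = 1
    rw [show k + 1 - 1 = (k - 1) + 1 by omega]
    exact stepa (k - 1) (by omega)
  have hBstep : ∀ l, 1 ≤ l → l + 1 ≤ tbar → Nat.dist (B (l + 1)) (B l) = 1 := by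
    intro l h1 h2
    show Nat.dist (β (ub (l + 1 - 1))) (β (ub (l - 1))) = 1
    rw [show l + 1 - 1 = (l - 1) + 1 by omega]
    exact stepb (l - 1) (by omega)
  have hA1 : A 1 = 1 := by show α (ua 0) = 1; rw [ua0, hα1]
  have hB1 : B 1 = 1 := by show β (ub 0) = 1; rw [ub0, hβ1]
  obtain ⟨cbar, hct, hpath⟩ := BPaux.core mbar tbar R A B hmbar1 (by omega)
    hA1 hB1 hAlb hAub hBlb hBub hAstep hBstep hmbarR
  -- pull the contracted path back to the original board
  set good5 : ℕ × ℕ → Prop :=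
    fun c => 1 ≤ c.1 ∧ c.1 ≤ s ∧ 1 ≤ c.2 ∧ c.2 ≤ t ∧ α c.1 = β c.2 with hgood5
  set map : ℕ × ℕ → ℕ × ℕ := fun p => (ua (p.1 - 1), ub (p.2 - 1)) with hmap
  have expand : ∀ p q,
      (1 ≤ p.1 ∧ p.1 ≤ mbar ∧ 1 ≤ p.2 ∧ p.2 ≤ tbar ∧ A p.1 = B p.2) →
      (1 ≤ q.1 ∧ q.1 ≤ mbar ∧ 1 ≤ q.2 ∧ q.2 ≤ tbar ∧ A q.1 = B q.2) →
      BPaux.dadj p q → BPaux.pfr adj8 good5 (map p) (map q) := by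
    intro p q hp hq hpq
    obtain ⟨hp1, hpm, hp2, hpt, hpb⟩ := hp
    obtain ⟨hq1, hqm, hq2, hqt, hqb⟩ := hq
    obtain ⟨hd1, hd2⟩ := hpq
    rw [BPaux.dist_one_iff] at hd1 hd2
    have hpb' : α (ua (p.1 - 1)) = β (ub (p.2 - 1)) := hpb
    have hqb' : α (ua (q.1 - 1)) = β (ub (q.2 - 1)) := hqb
    have hmapp : map p = (ua (p.1 - 1), ub (p.2 - 1)) := rfl
    have hmapq : map q = (ua (q.1 - 1), ub (q.2 - 1)) := rfl
    rw [hmapp, hmapq]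
    rcases hd1 with hk | hk <;> rcases hd2 with hl | hl
    · -- q = (p.1 - 1, p.2 - 1)
      have hkSa : p.1 - 2 < Sa := by omega
      have hlSb : p.2 - 2 < Sb := by omega
      have hplus : ua (p.1 - 2) < ua (p.1 - 1) := by
        have h := stricta (p.1 - 2) hkSa
        rwa [show p.1 - 2 + 1 = p.1 - 1 by omega] at h
      have hlplus : ub (p.2 - 2) < ub (p.2 - 1) := by
        have h := strictb (p.2 - 2) hlSb
        rwa [show p.2 - 2 + 1 = p.2 - 1 by omega] at h
      have hplat : ∀ m, ua (p.1 - 2) ≤ m → m < ua (p.1 - 1) → α m = α (ua (p.1 - 2)) := by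
        intro m h1 h2
        exact plata (p.1 - 2) hkSa m h1 (by rwa [show p.1 - 2 + 1 = p.1 - 1 by omega])
      have hplatb : ∀ m, ub (p.2 - 2) ≤ m → m < ub (p.2 - 1) → β m = β (ub (p.2 - 2)) := by
        intro m h1 h2
        exact platb (p.2 - 2) hlSb m h1 (by rwa [show p.2 - 2 + 1 = p.2 - 1 by omega])
      have hq1e : q.1 - 1 = p.1 - 2 := by omega
      have hq2e : q.2 - 1 = p.2 - 2 := by omega
      rw [hq1e, hq2e] at hqb' ⊢
      have hA1' := posa (p.1 - 1); have hA2' := lea (p.1 - 1)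
      have hA1'' := posa (p.1 - 2); have hA2'' := lea (p.1 - 2)
      have hB1' := posb (p.2 - 1); have hB2' := leb (p.2 - 1)
      have hB1'' := posb (p.2 - 2); have hB2'' := leb (p.2 - 2)
      -- diagonal step then horizontal then vertical
      have G1 : good5 (ua (p.1 - 1), ub (p.2 - 1)) := ⟨by omega, by omega, by omega, by omega, hpb'⟩
      have G2 : good5 (ua (p.1 - 1) - 1, ub (p.2 - 1) - 1) := by
        refine ⟨by omega, by omega, by omega, by omega, ?_⟩
        rw [hplat _ (by omega) (by omega), hplatb _ (by omega) (by omega)]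
        exact hqb'
      have S1 : BPaux.pfr adj8 good5 (ua (p.1 - 1), ub (p.2 - 1))
          (ua (p.1 - 1) - 1, ub (p.2 - 1) - 1) :=
        BPaux.pfr_dstep G1 G2 (by simp [Nat.dist]; omega) (by simp [Nat.dist]; omega)
      have S2 : BPaux.pfr adj8 good5 (ua (p.1 - 1) - 1, ub (p.2 - 1) - 1)
          (ua (p.1 - 2), ub (p.2 - 1) - 1) := by
        apply BPaux.pfr_hrun
        intro m hm1 hm2
        rw [min_eq_right (by omega)] at hm1
        rw [max_eq_left (by omega)] at hm2
        refine ⟨by omega, by omega, by omega, by omega, ?_⟩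
        rw [hplat m (by omega) (by omega), hplatb _ (by omega) (by omega)]
        exact hqb'
      have S3 : BPaux.pfr adj8 good5 (ua (p.1 - 2), ub (p.2 - 1) - 1)
          (ua (p.1 - 2), ub (p.2 - 2)) := by
        apply BPaux.pfr_vrun
        intro m hm1 hm2
        rw [min_eq_right (by omega)] at hm1
        rw [max_eq_left (by omega)] at hm2
        refine ⟨by omega, by omega, by omega, by omega, ?_⟩
        rw [hplatb m (by omega) (by omega)]
        exact hqb'
      exact BPaux.pfr_trans (BPaux.pfr_trans S1 S2) S3
    · -- q = (p.1 - 1, p.2 + 1)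
      have hkSa : p.1 - 2 < Sa := by omega
      have hlSb : p.2 - 1 < Sb := by omega
      have hplus : ua (p.1 - 2) < ua (p.1 - 1) := by
        have h := stricta (p.1 - 2) hkSa
        rwa [show p.1 - 2 + 1 = p.1 - 1 by omega] at h
      have hlplus : ub (p.2 - 1) < ub p.2 := by
        have h := strictb (p.2 - 1) hlSb
        rwa [show p.2 - 1 + 1 = p.2 by omega] at h
      have hplat : ∀ m, ua (p.1 - 2) ≤ m → m < ua (p.1 - 1) → α m = α (ua (p.1 - 2)) := by
        intro m h1 h2
        exact plata (p.1 - 2) hkSa m h1 (by rwa [show p.1 - 2 + 1 = p.1 - 1 by omega])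
      have hplatb : ∀ m, ub (p.2 - 1) ≤ m → m < ub p.2 → β m = β (ub (p.2 - 1)) := by
        intro m h1 h2
        exact platb (p.2 - 1) hlSb m h1 (by rwa [show p.2 - 1 + 1 = p.2 by omega])
      have hq1e : q.1 - 1 = p.1 - 2 := by omega
      have hq2e : q.2 - 1 = p.2 := by omega
      rw [hq1e, hq2e] at hqb' ⊢
      have hA1' := posa (p.1 - 1); have hA2' := lea (p.1 - 1)
      have hA1'' := posa (p.1 - 2); have hA2'' := lea (p.1 - 2)
      have hB1' := posb (p.2 - 1); have hB2' := leb (p.2 - 1)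
      have hB1'' := posb p.2; have hB2'' := leb p.2
      -- vertical up, then diagonal, then horizontal down
      have S1 : BPaux.pfr adj8 good5 (ua (p.1 - 1), ub (p.2 - 1))
          (ua (p.1 - 1), ub p.2 - 1) := by
        apply BPaux.pfr_vrun
        intro m hm1 hm2
        rw [min_eq_left (by omega)] at hm1
        rw [max_eq_right (by omega)] at hm2
        refine ⟨by omega, by omega, by omega, by omega, ?_⟩
        rw [hplatb m (by omega) (by omega)]
        exact hpb'
      have G2 : good5 (ua (p.1 - 1) - 1, ub p.2) := by
        refine ⟨by omega, by omega, by omega, by omega, ?_⟩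
        rw [hplat _ (by omega) (by omega)]
        exact hqb'
      have G1 : good5 (ua (p.1 - 1), ub p.2 - 1) := by
        refine ⟨by omega, by omega, by omega, by omega, ?_⟩
        rw [hplatb _ (by omega) (by omega)]
        exact hpb'
      have S2 : BPaux.pfr adj8 good5 (ua (p.1 - 1), ub p.2 - 1)
          (ua (p.1 - 1) - 1, ub p.2) :=
        BPaux.pfr_dstep G1 G2 (by simp [Nat.dist]; omega) (by simp [Nat.dist]; omega)
      have S3 : BPaux.pfr adj8 good5 (ua (p.1 - 1) - 1, ub p.2)
          (ua (p.1 - 2), ub p.2) := by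
        apply BPaux.pfr_hrun
        intro m hm1 hm2
        rw [min_eq_right (by omega)] at hm1
        rw [max_eq_left (by omega)] at hm2
        refine ⟨by omega, by omega, by omega, by omega, ?_⟩
        rw [hplat m (by omega) (by omega)]
        exact hqb'
      exact BPaux.pfr_trans (BPaux.pfr_trans S1 S2) S3
    · -- q = (p.1 + 1, p.2 - 1)
      have hkSa : p.1 - 1 < Sa := by omega
      have hlSb : p.2 - 2 < Sb := by omega
      have hplus : ua (p.1 - 1) < ua p.1 := by
        have h := stricta (p.1 - 1) hkSa
        rwa [show p.1 - 1 + 1 = p.1 by omega] at h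
      have hlplus : ub (p.2 - 2) < ub (p.2 - 1) := by
        have h := strictb (p.2 - 2) hlSb
        rwa [show p.2 - 2 + 1 = p.2 - 1 by omega] at h
      have hplat : ∀ m, ua (p.1 - 1) ≤ m → m < ua p.1 → α m = α (ua (p.1 - 1)) := by
        intro m h1 h2
        exact plata (p.1 - 1) hkSa m h1 (by rwa [show p.1 - 1 + 1 = p.1 by omega])
      have hplatb : ∀ m, ub (p.2 - 2) ≤ m → m < ub (p.2 - 1) → β m = β (ub (p.2 - 2)) := by
        intro m h1 h2
        exact platb (p.2 - 2) hlSb m h1 (by rwa [show p.2 - 2 + 1 = p.2 - 1 by omega])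
      have hq1e : q.1 - 1 = p.1 := by omega
      have hq2e : q.2 - 1 = p.2 - 2 := by omega
      rw [hq1e, hq2e] at hqb' ⊢
      have hA1' := posa (p.1 - 1); have hA2' := lea (p.1 - 1)
      have hA1'' := posa p.1; have hA2'' := lea p.1
      have hB1' := posb (p.2 - 1); have hB2' := leb (p.2 - 1)
      have hB1'' := posb (p.2 - 2); have hB2'' := leb (p.2 - 2)
      -- horizontal right, diagonal down-right, vertical down
      have S1 : BPaux.pfr adj8 good5 (ua (p.1 - 1), ub (p.2 - 1))
          (ua p.1 - 1, ub (p.2 - 1)) := by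
        apply BPaux.pfr_hrun
        intro m hm1 hm2
        rw [min_eq_left (by omega)] at hm1
        rw [max_eq_right (by omega)] at hm2
        refine ⟨by omega, by omega, by omega, by omega, ?_⟩
        rw [hplat m (by omega) (by omega)]
        exact hpb'
      have G1 : good5 (ua p.1 - 1, ub (p.2 - 1)) := by
        refine ⟨by omega, by omega, by omega, by omega, ?_⟩
        rw [hplat _ (by omega) (by omega)]
        exact hpb'
      have G2 : good5 (ua p.1, ub (p.2 - 1) - 1) := by
        refine ⟨by omega, by omega, by omega, by omega, ?_⟩
        rw [hplatb _ (by omega) (by omega)]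
        exact hqb'
      have S2 : BPaux.pfr adj8 good5 (ua p.1 - 1, ub (p.2 - 1))
          (ua p.1, ub (p.2 - 1) - 1) :=
        BPaux.pfr_dstep G1 G2 (by simp [Nat.dist]; omega) (by simp [Nat.dist]; omega)
      have S3 : BPaux.pfr adj8 good5 (ua p.1, ub (p.2 - 1) - 1)
          (ua p.1, ub (p.2 - 2)) := by
        apply BPaux.pfr_vrun
        intro m hm1 hm2
        rw [min_eq_right (by omega)] at hm1
        rw [max_eq_left (by omega)] at hm2
        refine ⟨by omega, by omega, by omega, by omega, ?_⟩
        rw [hplatb m (by omega) (by omega)]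
        exact hqb'
      exact BPaux.pfr_trans (BPaux.pfr_trans S1 S2) S3
    · -- q = (p.1 + 1, p.2 + 1)
      have hkSa : p.1 - 1 < Sa := by omega
      have hlSb : p.2 - 1 < Sb := by omega
      have hplus : ua (p.1 - 1) < ua p.1 := by
        have h := stricta (p.1 - 1) hkSa
        rwa [show p.1 - 1 + 1 = p.1 by omega] at h
      have hlplus : ub (p.2 - 1) < ub p.2 := by
        have h := strictb (p.2 - 1) hlSb
        rwa [show p.2 - 1 + 1 = p.2 by omega] at h
      have hplat : ∀ m, ua (p.1 - 1) ≤ m → m < ua p.1 → α m = α (ua (p.1 - 1)) := by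
        intro m h1 h2
        exact plata (p.1 - 1) hkSa m h1 (by rwa [show p.1 - 1 + 1 = p.1 by omega])
      have hplatb : ∀ m, ub (p.2 - 1) ≤ m → m < ub p.2 → β m = β (ub (p.2 - 1)) := by
        intro m h1 h2
        exact platb (p.2 - 1) hlSb m h1 (by rwa [show p.2 - 1 + 1 = p.2 by omega])
      have hq1e : q.1 - 1 = p.1 := by omega
      have hq2e : q.2 - 1 = p.2 := by omega
      rw [hq1e, hq2e] at hqb' ⊢
      have hA1' := posa (p.1 - 1); have hA2' := lea (p.1 - 1)
      have hA1'' := posa p.1; have hA2'' := lea p.1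
      have hB1' := posb (p.2 - 1); have hB2' := leb (p.2 - 1)
      have hB1'' := posb p.2; have hB2'' := leb p.2
      -- horizontal right, vertical up, diagonal up-right
      have S1 : BPaux.pfr adj8 good5 (ua (p.1 - 1), ub (p.2 - 1))
          (ua p.1 - 1, ub (p.2 - 1)) := by
        apply BPaux.pfr_hrun
        intro m hm1 hm2
        rw [min_eq_left (by omega)] at hm1
        rw [max_eq_right (by omega)] at hm2
        refine ⟨by omega, by omega, by omega, by omega, ?_⟩
        rw [hplat m (by omega) (by omega)]
        exact hpb'
      have S2 : BPaux.pfr adj8 good5 (ua p.1 - 1, ub (p.2 - 1))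
          (ua p.1 - 1, ub p.2 - 1) := by
        apply BPaux.pfr_vrun
        intro m hm1 hm2
        rw [min_eq_left (by omega)] at hm1
        rw [max_eq_right (by omega)] at hm2
        refine ⟨by omega, by omega, by omega, by omega, ?_⟩
        rw [hplat _ (by omega) (by omega), hplatb m (by omega) (by omega)]
        exact hpb'
      have G1 : good5 (ua p.1 - 1, ub p.2 - 1) := by
        refine ⟨by omega, by omega, by omega, by omega, ?_⟩
        rw [hplat _ (by omega) (by omega), hplatb _ (by omega) (by omega)]
        exact hpb'
      have G2 : good5 (ua p.1, ub p.2) := ⟨by omega, by omega, by omega, by omega, hqb'⟩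
      have S3 : BPaux.pfr adj8 good5 (ua p.1 - 1, ub p.2 - 1) (ua p.1, ub p.2) :=
        BPaux.pfr_dstep G1 G2 (by simp [Nat.dist]; omega) (by simp [Nat.dist]; omega)
      exact BPaux.pfr_trans (BPaux.pfr_trans S1 S2) S3
  have h0 : good5 (map (1, 1)) := by
    have : map (1, 1) = (1, 1) := by
      show (ua 0, ub 0) = (1, 1)
      rw [ua0, ub0]
    rw [this]
    exact ⟨le_rfl, hs, le_rfl, ht, by rw [hα1, hβ1]⟩
  have hpulled := BPaux.pfr_pullback map hpath h0 expand
  have hmap11 : map (1, 1) = (1, 1) := by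
    show (ua 0, ub 0) = (1, 1)
    rw [ua0, ub0]
  rw [hmap11] at hpulled
  -- goodness of the endpoint of the contracted path
  have hgcbar : 1 ≤ cbar.1 ∧ cbar.1 ≤ mbar ∧ 1 ≤ cbar.2 ∧ cbar.2 ≤ tbar ∧
      A cbar.1 = B cbar.2 := by
    obtain ⟨L, σ, e0, eL, hg, _⟩ := hpath
    have h := hg L le_rfl
    rwa [eL] at h
  have hcbarb : α (ua (cbar.1 - 1)) = β (ub (cbar.2 - 1)) := hgcbar.2.2.2.2
  -- final vertical run to row t
  have hcb2 : cbar.2 - 1 = Sb := by omega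
  have hend : BPaux.pfr adj8 good5 (map cbar) (ua (cbar.1 - 1), t) := by
    have hmapc : map cbar = (ua (cbar.1 - 1), ub Sb) := by
      show (ua (cbar.1 - 1), ub (cbar.2 - 1)) = _
      rw [hcb2]
    rw [hmapc]
    apply BPaux.pfr_vrun
    intro m hm1 hm2
    rw [min_eq_left (leb Sb)] at hm1
    rw [max_eq_right (leb Sb)] at hm2
    have hpb0 := posb Sb
    refine ⟨posa _, lea _, by omega, by omega, ?_⟩
    rw [stabb m hm1 hm2]
    rw [hcb2] at hcbarb
    exact hcbarb
  have hfull := BPaux.pfr_trans hpulled hend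
  obtain ⟨L, σ, e0, eL, hg, hadj⟩ := hfull
  refine ⟨L, σ, by rw [e0]; exact Set.mem_singleton _, ?_, ?_, hadj⟩
  · show (σ L).2 = t
    rw [eL]
  · intro i hi
    obtain ⟨g1, g2, g3, g4, g5⟩ := hg i hi
    exact ⟨⟨g1, g2, g3, g4⟩, g5⟩
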